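/- Fix M ≥ 1 and set φ = π/(2M), c_N = (cos(π/(2N)))^N, and let (a_m(c), b_m(c)) = S_c^m(1,0) where S_c(a,b) = (a·cos φ − b·sin φ, c·(a·sin φ + b·cos φ)). Then the blocking-mode detection probability b_M(c_N)^2 converges to 1 as N → ∞; that is, for any fixed number of outer cycles M, the counterfactuality rate of the blocking mode tends to 1 as the number of inner cycles N tends to infinity. -/

import Mathlib

open Real Function Filter

/-- The inner-Zeno survival amplitude tends to 1. -/
lemma cN_tendsto_one :
    Filter.Tendsto (fun N : ℕ => (Real.cos (Real.pi / (2 * N))) ^ N)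
      Filter.atTop (nhds 1) := by
  have hlo : Filter.Tendsto (fun N : ℕ => 1 - Real.pi ^ 2 / 8 * (1 / (N : ℝ)))
      Filter.atTop (nhds 1) := by
    have : Filter.Tendsto (fun n : ℕ => 1 / (n : ℝ)) Filter.atTop (nhds 0) :=
      tendsto_one_div_atTop_nhds_zero_nat
    have h := (tendsto_const_nhds (x := (Real.pi ^ 2 / 8 : ℝ))).mul this
    rw [mul_zero] at h
    have h2 := (tendsto_const_nhds (x := (1 : ℝ))).sub h
    simpa using h2
  refine tendsto_of_tendsto_of_tendsto_of_le_of_le' hlo tendsto_const_nhds ?_ ?_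
  · filter_upwards [eventually_ge_atTop 2] with N hN
    have hN0 : (0 : ℝ) < N := by positivity
    set x : ℝ := Real.pi / (2 * N) with hx
    have hx0 : 0 < x := by
      apply div_pos Real.pi_pos; positivity
    have hxle : x ≤ Real.pi / 4 := by
      rw [hx]
      apply div_le_div_of_nonneg_left Real.pi_pos.le (by norm_num)
      have : (2 : ℝ) ≤ N := by exact_mod_cast hN
      linarith
    have hxlt : x ≤ 1 := le_trans hxle (by
      have := Real.pi_le_four
      linarith)
    have hb0 : (0 : ℝ) ≤ 1 - x ^ 2 / 2 := by nlinarith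
    have hcb : 1 - x ^ 2 / 2 ≤ Real.cos x := Real.one_sub_sq_div_two_le_cos
    have hpow : (1 - x ^ 2 / 2) ^ N ≤ (Real.cos x) ^ N :=
      pow_le_pow_left₀ hb0 hcb N
    have hbern : 1 + (N : ℝ) * (-(x ^ 2 / 2)) ≤ (1 + (-(x ^ 2 / 2))) ^ N := by
      apply one_add_mul_le_pow
      nlinarith
    have hxval : x ^ 2 = Real.pi ^ 2 / (4 * (N : ℝ) ^ 2) := by
      rw [hx]; field_simp; ring
    have hkey : 1 - Real.pi ^ 2 / 8 * (1 / (N : ℝ)) ≤ 1 + (N : ℝ) * (-(x ^ 2 / 2)) := by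
      rw [hxval]
      have : (N : ℝ) * -(Real.pi ^ 2 / (4 * (N : ℝ) ^ 2) / 2)
          = -(Real.pi ^ 2 / 8 * (1 / (N : ℝ))) := by
        field_simp; ring
      rw [this]; linarith
    calc 1 - Real.pi ^ 2 / 8 * (1 / (N : ℝ))
        ≤ (1 + (-(x ^ 2 / 2))) ^ N := le_trans hkey hbern
      _ = (1 - x ^ 2 / 2) ^ N := by ring_nf
      _ ≤ (Real.cos x) ^ N := hpow
  · filter_upwards [eventually_ge_atTop 1] with N hN
    have hN0 : (0 : ℝ) < N := by exact_mod_cast Nat.lt_of_lt_of_le Nat.zero_lt_one hN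
    have hmem : Real.pi / (2 * N) ∈ Set.Icc (-(Real.pi/2)) (Real.pi/2) := by
      constructor
      · have : 0 < Real.pi / (2 * (N : ℝ)) := by positivity
        linarith [Real.pi_pos]
      · rw [div_le_div_iff₀ (by positivity) (by norm_num)]
        nlinarith [Real.pi_pos, show (1:ℝ) ≤ N by exact_mod_cast hN]
    have h0 : 0 ≤ Real.cos (Real.pi / (2 * N)) := Real.cos_nonneg_of_mem_Icc hmem
    exact pow_le_one₀ h0 (Real.cos_le_one _)

/-- Blocking-mode counterfactuality rate of SLAZ2013: for any fixed number of
outer cycles `M`, with `φ = π/(2M)`, damped outer evolution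
`S c (a, b) = (a cos φ - b sin φ, c (a sin φ + b cos φ))` and inner-Zeno
survival amplitude `c_N = (cos (π/(2N)))^N`, the detection probability
`b_M(c_N)^2` converges to 1 as `N → ∞`. -/
theorem blocking_mode_counterfactuality (M : ℕ) (hM : 1 ≤ M) (φ : ℝ)
    (hφ : φ = Real.pi / (2 * M)) (S : ℝ → ℝ × ℝ → ℝ × ℝ)
    (hS : ∀ (c : ℝ) (p : ℝ × ℝ),
      S c p = (p.1 * Real.cos φ - p.2 * Real.sin φ,
               c * (p.1 * Real.sin φ + p.2 * Real.cos φ))) :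
    Filter.Tendsto
      (fun N : ℕ =>
        (((S ((Real.cos (Real.pi / (2 * N))) ^ N))^[M]
            ((1 : ℝ), (0 : ℝ))).2) ^ 2)
      Filter.atTop (nhds 1) := by
  -- continuity in c
  have hcont : ∀ m : ℕ, Continuous (fun c : ℝ => (S c)^[m] ((1 : ℝ), (0 : ℝ))) := by
    intro m
    induction m with
    | zero =>
      simp only [Function.iterate_zero, id_eq]
      exact continuous_const
    | succ n ih =>
      have : (fun c : ℝ => (S c)^[n + 1] ((1 : ℝ), (0 : ℝ)))
          = fun c : ℝ => S c ((S c)^[n] ((1 : ℝ), (0 : ℝ))) := by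
        funext c; rw [Function.iterate_succ_apply']
      rw [this]
      simp only [hS]
      exact Continuous.prodMk
        ((ih.fst.mul continuous_const).sub (ih.snd.mul continuous_const))
        (continuous_id.mul ((ih.fst.mul continuous_const).add
          (ih.snd.mul continuous_const)))
  -- value at c = 1
  have hval : ∀ m : ℕ, (S 1)^[m] ((1 : ℝ), (0 : ℝ))
      = (Real.cos (m * φ), Real.sin (m * φ)) := by
    intro m
    induction m with
    | zero => simp
    | succ n ih =>
      rw [Function.iterate_succ_apply', ih, hS]
      push_cast
      rw [show ((n : ℝ) + 1) * φ = n * φ + φ by ring, Real.cos_add, Real.sin_add]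
      simp only [Prod.mk.injEq]
      exact ⟨trivial, by ring⟩
  have hM0 : (M : ℝ) ≠ 0 := by exact_mod_cast Nat.one_le_iff_ne_zero.mp hM
  have hMφ : (M : ℝ) * φ = Real.pi / 2 := by
    rw [hφ]; field_simp
  have hf1 : ((((S 1)^[M] ((1 : ℝ), (0 : ℝ))).2) ^ 2) = 1 := by
    rw [hval M, hMφ]; simp
  have hc : Continuous (fun c : ℝ => (((S c)^[M] ((1 : ℝ), (0 : ℝ))).2) ^ 2) :=
    (((hcont M).snd).pow 2)
  have := (hc.tendsto 1).comp cN_tendsto_one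
  rw [hf1] at this
  exact this
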